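/- arXiv:1506.03251 — 4 statements merged into one kernel-verified Lean document; each statement's English description precedes it below -/
import Mathlib

section
/- For every n ≥ 4, the helm graph H_n satisfies β(H_n) + β(complement of H_n) = 3n − 2 and β(H_n) · β(complement of H_n) = 2n(n − 1), where β denotes the vertex cover number. -/
/-- The independence number of a finite simple graph: the maximum cardinality of a
set of pairwise nonadjacent vertices. -/
noncomputable def indepNum {V : Type*} [Fintype V] (G : SimpleGraph V) : ℕ :=
  sSup {k : ℕ | ∃ s : Finset V, s.card = k ∧ ∀ u ∈ s, ∀ v ∈ s, ¬ G.Adj u v}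

/-- The vertex cover number of a finite simple graph: the minimum cardinality of a
set of vertices containing at least one endpoint of every edge. -/
noncomputable def coverNum {V : Type*} [Fintype V] (G : SimpleGraph V) : ℕ :=
  sInf {k : ℕ | ∃ s : Finset V, s.card = k ∧ ∀ u v, G.Adj u v → u ∈ s ∨ v ∈ s}

/-- The helm graph `H_n`: a wheel (cycle vertices `Sum.inl (some i)`, hub `Sum.inl none`)
together with a pendant vertex `Sum.inr i` attached to each cycle vertex. -/
def helmGraph (n : ℕ) : SimpleGraph (Option (Fin n) ⊕ Fin n) :=
  SimpleGraph.fromRel (fun a b =>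
    (∃ i : Fin n, a = Sum.inl none ∧ b = Sum.inl (some i)) ∨
    (∃ i j : Fin n, a = Sum.inl (some i) ∧ b = Sum.inl (some j) ∧ (i.val + 1) % n = j.val) ∨
    (∃ i : Fin n, a = Sum.inl (some i) ∧ b = Sum.inr i))

/-- The vertex cover number of the helm graph is `n`. -/
lemma coverNum_helmGraph (n : ℕ) : coverNum (helmGraph n) = n := by
  have hmem : n ∈ {k : ℕ | ∃ s : Finset (Option (Fin n) ⊕ Fin n), s.card = k ∧
      ∀ u v, (helmGraph n).Adj u v → u ∈ s ∨ v ∈ s} := by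
    refine ⟨Finset.univ.image (fun i : Fin n => (Sum.inl (some i) : Option (Fin n) ⊕ Fin n)),
      ?_, ?_⟩
    · rw [Finset.card_image_of_injective _ (by intro a b h; simpa using h)]
      simp
    · intro u v huv
      simp only [helmGraph, SimpleGraph.fromRel_adj] at huv
      obtain ⟨-, h | h⟩ := huv <;>
        rcases h with ⟨i, hu, hv⟩ | ⟨i, j, hu, hv, -⟩ | ⟨i, hu, hv⟩ <;>
        subst hu <;> subst hv <;> simp
  refine le_antisymm (Nat.sInf_le hmem) (le_csInf ⟨n, hmem⟩ ?_)
  rintro m ⟨s, rfl, hcov⟩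
  have hi : ∀ i : Fin n, Sum.inl (some i) ∈ s ∨ (Sum.inr i : Option (Fin n) ⊕ Fin n) ∈ s := by
    intro i
    refine hcov _ _ ?_
    simp only [helmGraph, SimpleGraph.fromRel_adj]
    exact ⟨by simp, Or.inl (Or.inr (Or.inr ⟨i, rfl, rfl⟩))⟩
  have hinj : Function.Injective (fun i : Fin n =>
      (if h : Sum.inl (some i) ∈ s then (⟨Sum.inl (some i), h⟩ : {x // x ∈ s})
        else ⟨Sum.inr i, (hi i).resolve_left h⟩)) := by
    intro a b hab
    by_cases ha : Sum.inl (some a) ∈ s <;> by_cases hb : Sum.inl (some b) ∈ s <;>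
      simp [ha, hb, Subtype.ext_iff] at hab <;> simpa using hab
  calc n = Fintype.card (Fin n) := by simp
    _ ≤ Fintype.card {x // x ∈ s} := Fintype.card_le_of_injective _ hinj
    _ = s.card := Fintype.card_coe s

/-- Adjacent cycle vertices of the helm graph are consecutive on the cycle. -/
lemma helmGraph_cyc_adj (n : ℕ) (i j : Fin n)
    (h : (helmGraph n).Adj (Sum.inl (some i)) (Sum.inl (some j))) :
    i ≠ j ∧ ((i.val + 1) % n = j.val ∨ (j.val + 1) % n = i.val) := by
  simp only [helmGraph, SimpleGraph.fromRel_adj] at h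
  obtain ⟨hne, h | h⟩ := h <;>
    rcases h with ⟨a, ha, hb⟩ | ⟨a, b, ha, hb, hab⟩ | ⟨a, ha, hb⟩ <;>
    simp_all <;> tauto

/-- Any clique of the helm graph (`n ≥ 4`) has at most three vertices. -/
lemma helmGraph_clique_le_three (n : ℕ) (hn : 4 ≤ n) (t : Finset (Option (Fin n) ⊕ Fin n))
    (h : ∀ u ∈ t, ∀ v ∈ t, u ≠ v → (helmGraph n).Adj u v) : t.card ≤ 3 := by
  by_cases hp : ∃ i : Fin n, (Sum.inr i : Option (Fin n) ⊕ Fin n) ∈ t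
  · obtain ⟨i, hi⟩ := hp
    have hsub : t ⊆ {Sum.inl (some i), Sum.inr i} := by
      intro x hx
      by_cases hxi : x = Sum.inr i
      · simp [hxi]
      · have hadj := h x hx _ hi hxi
        simp only [helmGraph, SimpleGraph.fromRel_adj] at hadj
        obtain ⟨-, hr | hr⟩ := hadj <;>
          rcases hr with ⟨a, ha, hb⟩ | ⟨a, b, ha, hb, -⟩ | ⟨a, ha, hb⟩ <;>
          simp_all
    calc t.card ≤ ({Sum.inl (some i), Sum.inr i} : Finset _).card := Finset.card_le_card hsub
      _ ≤ 2 := Finset.card_insert_le _ _ |>.trans (by simp)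
      _ ≤ 3 := by omega
  · push_neg at hp
    set c := t.erase (Sum.inl none) with hc
    have hcyc : ∀ x ∈ c, ∃ i : Fin n, x = Sum.inl (some i) := by
      intro x hx
      obtain ⟨hxne, hxt⟩ := Finset.mem_erase.mp hx
      match x with
      | Sum.inl none => exact absurd rfl hxne
      | Sum.inl (some i) => exact ⟨i, rfl⟩
      | Sum.inr i => exact absurd hxt (hp i)
    have hc2 : c.card ≤ 2 := by
      by_contra hgt
      push_neg at hgt
      obtain ⟨x, y, z, hx, hy, hz, hxy, hxz, hyz⟩ := Finset.two_lt_card_iff.mp hgt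
      obtain ⟨i, rfl⟩ := hcyc x hx
      obtain ⟨j, rfl⟩ := hcyc y hy
      obtain ⟨k, rfl⟩ := hcyc z hz
      have h1 := helmGraph_cyc_adj n i j
        (h _ (Finset.erase_subset _ _ hx) _ (Finset.erase_subset _ _ hy) hxy)
      have h2 := helmGraph_cyc_adj n i k
        (h _ (Finset.erase_subset _ _ hx) _ (Finset.erase_subset _ _ hz) hxz)
      have h3 := helmGraph_cyc_adj n j k
        (h _ (Finset.erase_subset _ _ hy) _ (Finset.erase_subset _ _ hz) hyz)
      have hmod : ∀ x y : ℕ, x < n → y < n → (x + 1) % n = y →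
          x + 1 = y ∨ (x + 1 = n ∧ y = 0) := by
        intro x y hx' hy' hxy'
        rcases Nat.lt_or_ge (x + 1) n with hlt | hge
        · left; rwa [Nat.mod_eq_of_lt hlt] at hxy'
        · right
          have : x + 1 = n := by omega
          rw [this, Nat.mod_self] at hxy'
          exact ⟨this, hxy'.symm⟩
      have hi := i.isLt; have hj := j.isLt; have hk := k.isLt
      have hij : i.val ≠ j.val := fun e => h1.1 (Fin.ext e)
      have hik : i.val ≠ k.val := fun e => h2.1 (Fin.ext e)
      have hjk : j.val ≠ k.val := fun e => h3.1 (Fin.ext e)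
      rcases h1.2 with e1 | e1 <;> rcases h2.2 with e2 | e2 <;> rcases h3.2 with e3 | e3 <;>
      [ (have := hmod _ _ hi hj e1; have := hmod _ _ hi hk e2; have := hmod _ _ hj hk e3);
        (have := hmod _ _ hi hj e1; have := hmod _ _ hi hk e2; have := hmod _ _ hk hj e3);
        (have := hmod _ _ hi hj e1; have := hmod _ _ hk hi e2; have := hmod _ _ hj hk e3);
        (have := hmod _ _ hi hj e1; have := hmod _ _ hk hi e2; have := hmod _ _ hk hj e3);
        (have := hmod _ _ hj hi e1; have := hmod _ _ hi hk e2; have := hmod _ _ hj hk e3);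
        (have := hmod _ _ hj hi e1; have := hmod _ _ hi hk e2; have := hmod _ _ hk hj e3);
        (have := hmod _ _ hj hi e1; have := hmod _ _ hk hi e2; have := hmod _ _ hj hk e3);
        (have := hmod _ _ hj hi e1; have := hmod _ _ hk hi e2; have := hmod _ _ hk hj e3)] <;>
      omega
    calc t.card ≤ (insert (Sum.inl none : Option (Fin n) ⊕ Fin n) c).card :=
          Finset.card_le_card (by intro x hx; by_cases hxn : x = Sum.inl none <;>
            simp [hc, Finset.mem_insert, Finset.mem_erase, hxn, hx])
      _ ≤ c.card + 1 := Finset.card_insert_le _ _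
      _ ≤ 3 := by omega

/-- The vertex cover number of the complement of the helm graph is `2n - 2` for `n ≥ 4`. -/
lemma coverNum_helmGraph_compl (n : ℕ) (hn : 4 ≤ n) :
    coverNum (helmGraph n)ᶜ = 2 * n - 2 := by
  have hcardV : Fintype.card (Option (Fin n) ⊕ Fin n) = 2 * n + 1 := by
    simp; omega
  set i0 : Fin n := ⟨0, by omega⟩ with hi0
  set i1 : Fin n := ⟨1, by omega⟩ with hi1
  have h01 : (i0.val + 1) % n = i1.val := by
    simp only [hi0, hi1]
    exact Nat.mod_eq_of_lt (by omega)
  have hne01 : i0 ≠ i1 := by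
    simp [hi0, hi1, Fin.ext_iff]
  have hadj01 : (helmGraph n).Adj (Sum.inl (some i0)) (Sum.inl (some i1)) := by
    simp only [helmGraph, SimpleGraph.fromRel_adj]
    refine ⟨by simpa using hne01, Or.inl (Or.inr (Or.inl ⟨i0, i1, rfl, rfl, h01⟩))⟩
  have hadjh0 : (helmGraph n).Adj (Sum.inl none) (Sum.inl (some i0)) := by
    simp only [helmGraph, SimpleGraph.fromRel_adj]
    exact ⟨by simp, Or.inl (Or.inl ⟨i0, trivial, rfl⟩)⟩
  have hadjh1 : (helmGraph n).Adj (Sum.inl none) (Sum.inl (some i1)) := by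
    simp only [helmGraph, SimpleGraph.fromRel_adj]
    exact ⟨by simp, Or.inl (Or.inl ⟨i1, trivial, rfl⟩)⟩
  have hmem : 2 * n - 2 ∈ {k : ℕ | ∃ s : Finset (Option (Fin n) ⊕ Fin n), s.card = k ∧
      ∀ u v, (helmGraph n)ᶜ.Adj u v → u ∈ s ∨ v ∈ s} := by
    refine ⟨Finset.univ \ {Sum.inl none, Sum.inl (some i0), Sum.inl (some i1)}, ?_, ?_⟩
    · rw [Finset.card_sdiff_of_subset (Finset.subset_univ _), Finset.card_univ, hcardV]
      have h3 : ({Sum.inl none, Sum.inl (some i0), Sum.inl (some i1)} :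
          Finset (Option (Fin n) ⊕ Fin n)).card = 3 := by
        rw [Finset.card_insert_of_notMem (by simp),
          Finset.card_insert_of_notMem (by simpa using hne01), Finset.card_singleton]
      rw [h3]
      omega
    · intro u v huv
      rw [SimpleGraph.compl_adj] at huv
      obtain ⟨hne, hnadj⟩ := huv
      by_contra hcon
      push_neg at hcon
      obtain ⟨hu, hv⟩ := hcon
      simp only [Finset.mem_sdiff, Finset.mem_univ, true_and, not_not, Finset.mem_insert,
        Finset.mem_singleton] at hu hv
      rcases hu with rfl | rfl | rfl <;> rcases hv with rfl | rfl | rfl <;>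
        first
          | exact hne rfl
          | exact hnadj hadj01
          | exact hnadj hadj01.symm
          | exact hnadj hadjh0
          | exact hnadj hadjh0.symm
          | exact hnadj hadjh1
          | exact hnadj hadjh1.symm
  refine le_antisymm (Nat.sInf_le hmem) (le_csInf ⟨_, hmem⟩ ?_)
  rintro m ⟨s, rfl, hcov⟩
  have hclique : ∀ u ∈ sᶜ, ∀ v ∈ sᶜ, u ≠ v → (helmGraph n).Adj u v := by
    intro u hu v hv hne
    by_contra hna
    have : (helmGraph n)ᶜ.Adj u v := by rw [SimpleGraph.compl_adj]; exact ⟨hne, hna⟩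
    rcases hcov u v this with h | h
    · exact (Finset.mem_compl.mp hu) h
    · exact (Finset.mem_compl.mp hv) h
  have h3 := helmGraph_clique_le_three n hn _ hclique
  rw [Finset.card_compl, hcardV] at h3
  omega

/-- For `n ≥ 4`, the helm graph satisfies `β(H_n) + β(H_nᶜ) = 3n - 2` and
`β(H_n) * β(H_nᶜ) = 2n(n-1)`. -/
theorem coverNum_helmGraph_add_mul_complement (n : ℕ) (hn : 4 ≤ n) :
    coverNum (helmGraph n) + coverNum (helmGraph n)ᶜ = 3 * n - 2 ∧
    coverNum (helmGraph n) * coverNum (helmGraph n)ᶜ = 2 * n * (n - 1) := by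
  rw [coverNum_helmGraph n, coverNum_helmGraph_compl n hn]
  obtain ⟨k, rfl⟩ : ∃ k, n = k + 4 := ⟨n - 4, by omega⟩
  have e1 : 2 * (k + 4) - 2 = 2 * k + 6 := by omega
  have e2 : (k + 4) - 1 = k + 3 := by omega
  have e3 : 3 * (k + 4) - 2 = 3 * k + 10 := by omega
  rw [e1, e2, e3]
  constructor
  · ring
  · ring
end

section
/- For every n ≥ 3, the complete sun graph S_n satisfies β(S_n) + β(complement of S_n) = 2n and β(S_n) · β(complement of S_n) = n², where β denotes the vertex cover number. -/
/-- The complete sun graph `S_n`: the independent set `U` consists of the vertices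
`Sum.inl i`, the set `W` of vertices `Sum.inr j` induces a complete graph, and
`u_i` is adjacent to `w_j` iff `j = i` or `j = i + 1 (mod n)`. -/
def sunGraph (n : ℕ) : SimpleGraph (Fin n ⊕ Fin n) :=
  SimpleGraph.fromRel (fun a b =>
    (∃ i j : Fin n, a = Sum.inr i ∧ b = Sum.inr j) ∨
    (∃ i j : Fin n, a = Sum.inl i ∧ b = Sum.inr j ∧ (j = i ∨ (i.val + 1) % n = j.val)))

open Finset

lemma adj_ll {n : ℕ} {i j : Fin n} : ¬ (sunGraph n).Adj (Sum.inl i) (Sum.inl j) := by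
  simp [sunGraph]

lemma adj_rr {n : ℕ} {i j : Fin n} : (sunGraph n).Adj (Sum.inr i) (Sum.inr j) ↔ i ≠ j := by
  simp [sunGraph]

lemma adj_lr {n : ℕ} {i j : Fin n} :
    (sunGraph n).Adj (Sum.inl i) (Sum.inr j) ↔ (j = i ∨ (i.val + 1) % n = j.val) := by
  simp [sunGraph]

/-- decompose a finset of a sum type -/
lemma card_le_AB {n : ℕ} (t : Finset (Fin n ⊕ Fin n)) :
    t.card ≤ (univ.filter (fun i => Sum.inl i ∈ t)).card
      + (univ.filter (fun j => Sum.inr j ∈ t)).card := by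
  set A := univ.filter (fun i : Fin n => Sum.inl i ∈ t)
  set B := univ.filter (fun j : Fin n => Sum.inr j ∈ t)
  have hsub : t ⊆ A.image Sum.inl ∪ B.image Sum.inr := by
    intro x hx
    rcases x with i | j
    · exact mem_union_left _ (mem_image_of_mem _ (by simp [A, hx]))
    · exact mem_union_right _ (mem_image_of_mem _ (by simp [B, hx]))
  calc t.card ≤ (A.image Sum.inl ∪ B.image Sum.inr).card := card_le_card hsub
    _ ≤ (A.image Sum.inl).card + (B.image Sum.inr).card := card_union_le _ _
    _ ≤ A.card + B.card := add_le_add (card_image_le) (card_image_le)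

lemma indep_sun {n : ℕ} (t : Finset (Fin n ⊕ Fin n))
    (h : ∀ u ∈ t, ∀ v ∈ t, ¬ (sunGraph n).Adj u v) : t.card ≤ n := by
  set A := univ.filter (fun i : Fin n => Sum.inl i ∈ t) with hA
  set B := univ.filter (fun j : Fin n => Sum.inr j ∈ t) with hB
  have hle := card_le_AB t
  rw [← hA, ← hB] at hle
  have hB1 : B.card ≤ 1 := by
    apply card_le_one.2
    intro a ha b hb
    by_contra hab
    exact h _ (by simpa [B] using ha) _ (by simpa [B] using hb) (adj_rr.2 hab)
  rcases B.eq_empty_or_nonempty with hBe | ⟨j, hj⟩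
  · have : A.card ≤ n := by simpa using card_le_univ A
    simp [hBe] at hle; omega
  · have hjt : Sum.inr j ∈ t := by simpa [B] using hj
    have hjA : j ∉ A := by
      intro hjA
      exact h _ (by simpa [A] using hjA) _ hjt (adj_lr.2 (Or.inl rfl))
    have : A ⊆ univ.erase j := by
      intro a ha; rw [mem_erase]; exact ⟨fun e => hjA (e ▸ ha), mem_univ a⟩
    have hAcard : A.card ≤ n - 1 := by
      have := card_le_card this
      simpa [card_erase_of_mem] using this
    have hn1 : 1 ≤ n := j.pos
    omega

lemma indep_sun_compl {n : ℕ} (hn : 3 ≤ n) (t : Finset (Fin n ⊕ Fin n))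
    (h : ∀ u ∈ t, ∀ v ∈ t, ¬ (sunGraph n)ᶜ.Adj u v) : t.card ≤ n := by
  set A := univ.filter (fun i : Fin n => Sum.inl i ∈ t) with hA
  set B := univ.filter (fun j : Fin n => Sum.inr j ∈ t) with hB
  have hle := card_le_AB t
  rw [← hA, ← hB] at hle
  have hA1 : A.card ≤ 1 := by
    apply card_le_one.2
    intro a ha b hb
    by_contra hab
    refine h _ (by simpa [A] using ha) _ (by simpa [A] using hb) ?_
    exact ⟨by simp [hab], adj_ll⟩
  rcases A.eq_empty_or_nonempty with hAe | ⟨i, hi⟩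
  · have : B.card ≤ n := by simpa using card_le_univ B
    simp [hAe] at hle; omega
  · have hit : Sum.inl i ∈ t := by simpa [A] using hi
    have hBsub : B ⊆ {i, ⟨(i.val + 1) % n, Nat.mod_lt _ (by omega)⟩} := by
      intro j hj
      have hjt : Sum.inr j ∈ t := by simpa [B] using hj
      have hna := h _ hit _ hjt
      have : (sunGraph n).Adj (Sum.inl i) (Sum.inr j) := by
        by_contra hadj
        exact hna ⟨by simp, hadj⟩
      rcases adj_lr.1 this with h1 | h2
      · simp [mem_insert, h1]
      · simp [mem_insert, Fin.ext_iff, h2]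
    have : B.card ≤ 2 := le_trans (card_le_card hBsub) (card_insert_le _ _ |>.trans (by simp))
    omega

lemma cover_card_ge {V : Type*} [Fintype V] [DecidableEq V] {G : SimpleGraph V} {s : Finset V}
    (hc : ∀ u v, G.Adj u v → u ∈ s ∨ v ∈ s)
    {m : ℕ} (hind : ∀ t : Finset V, (∀ u ∈ t, ∀ v ∈ t, ¬ G.Adj u v) → t.card ≤ m) :
    Fintype.card V - m ≤ s.card := by
  have hindep : ∀ u ∈ sᶜ, ∀ v ∈ sᶜ, ¬ G.Adj u v := by
    intro u hu v hv hadj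
    rcases hc u v hadj with h | h
    · exact (mem_compl.1 hu) h
    · exact (mem_compl.1 hv) h
  have h1 := hind sᶜ hindep
  have h2 : s.card + sᶜ.card = Fintype.card V := card_add_card_compl s
  omega

lemma coverNum_eq {V : Type*} [Fintype V] [DecidableEq V] {G : SimpleGraph V} {s : Finset V} {m : ℕ}
    (hcard : s.card = m) (hc : ∀ u v, G.Adj u v → u ∈ s ∨ v ∈ s)
    (hm : Fintype.card V = 2 * m)
    (hind : ∀ t : Finset V, (∀ u ∈ t, ∀ v ∈ t, ¬ G.Adj u v) → t.card ≤ m) :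
    coverNum G = m := by
  apply le_antisymm
  · exact Nat.sInf_le ⟨s, hcard, hc⟩
  · have hne : {k : ℕ | ∃ s' : Finset V, s'.card = k ∧ ∀ u v, G.Adj u v → u ∈ s' ∨ v ∈ s'}.Nonempty :=
      ⟨m, s, hcard, hc⟩
    apply le_csInf hne
    rintro k ⟨u, hu, huc⟩
    have := cover_card_ge huc hind
    omega

/-- For `n ≥ 3`, the complete sun graph satisfies `β(S_n) + β(S_nᶜ) = 2n` and
`β(S_n) * β(S_nᶜ) = n²`. -/
theorem coverNum_sunGraph_add_mul_complement (n : ℕ) (hn : 3 ≤ n) :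
    coverNum (sunGraph n) + coverNum (sunGraph n)ᶜ = 2 * n ∧
    coverNum (sunGraph n) * coverNum (sunGraph n)ᶜ = n ^ 2 := by
  have hcV : Fintype.card (Fin n ⊕ Fin n) = 2 * n := by simp; ring
  have h1 : coverNum (sunGraph n) = n := by
    refine coverNum_eq (s := univ.image (Sum.inr : Fin n → _)) ?_ ?_ hcV (fun t ht => indep_sun t ht)
    · rw [card_image_of_injective _ Sum.inr_injective, card_univ, Fintype.card_fin]
    · intro u v hadj
      rcases u with i | i <;> rcases v with j | j
      · exact absurd hadj adj_ll
      · right; simp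
      · left; simp
      · left; simp
  have h2 : coverNum (sunGraph n)ᶜ = n := by
    refine coverNum_eq (s := univ.image (Sum.inl : Fin n → _)) ?_ ?_ hcV
      (fun t ht => indep_sun_compl hn t ht)
    · rw [card_image_of_injective _ Sum.inl_injective, card_univ, Fintype.card_fin]
    · intro u v hadj
      rcases u with i | i <;> rcases v with j | j
      · left; simp
      · left; simp
      · right; simp
      · exact absurd (adj_rr.2 (by rintro rfl; exact hadj.1 rfl)) hadj.2
  rw [h1, h2]; constructor <;> ring
end

section
/- For all integers m ≥ 1 and n ≥ 4 with mn even, the independence number of the armed crown graph obtained from the cycle C_n and paths P_m equals mn/2. -/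
/-- The armed crown graph: vertices `(i, j)` with `i : Fin n`, `j : Fin m`; the vertices
`(i, 0)` form a cycle `C_n`, and for each `i` the vertices `(i, 0), (i, 1), …, (i, m-1)`
form a path `P_m` adjoined to the cycle vertex `(i, 0)`. -/
def armedCrownGraph (m n : ℕ) : SimpleGraph (Fin n × Fin m) :=
  SimpleGraph.fromRel (fun a b =>
    (a.2.val = 0 ∧ b.2.val = 0 ∧ (a.1.val + 1) % n = b.1.val) ∨
    (a.1 = b.1 ∧ a.2.val + 1 = b.2.val))

set_option maxHeartbeats 1600000

/-- If a graph has a fixed-point-free adjacency involution (a perfect matching),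
then twice the size of any independent set is at most the number of vertices. -/
lemma two_mul_indep_le {V : Type*} [Fintype V] [DecidableEq V] (G : SimpleGraph V)
    (p : V → V) (hp : ∀ v, G.Adj v (p v)) (hinv : ∀ v, p (p v) = v)
    (s : Finset V) (hs : ∀ u ∈ s, ∀ v ∈ s, ¬ G.Adj u v) :
    2 * s.card ≤ Fintype.card V := by
  have hinj : Function.Injective p := Function.LeftInverse.injective hinv
  have hdisj : Disjoint s (s.image p) := by
    rw [Finset.disjoint_right]
    intro v hv hvs
    obtain ⟨u, hu, rfl⟩ := Finset.mem_image.mp hv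
    exact hs u hu (p u) hvs (hp u)
  calc 2 * s.card = s.card + (s.image p).card := by
        rw [Finset.card_image_of_injective _ hinj]; ring
    _ = (s ∪ s.image p).card := (Finset.card_union_of_disjoint hdisj).symm
    _ ≤ Fintype.card V := Finset.card_le_univ _

lemma armedCrownGraph_adj (m n : ℕ) (a b : Fin n × Fin m) :
    (armedCrownGraph m n).Adj a b ↔ a ≠ b ∧
      (((a.2.val = 0 ∧ b.2.val = 0 ∧ (a.1.val + 1) % n = b.1.val) ∨
        (a.1 = b.1 ∧ a.2.val + 1 = b.2.val)) ∨
       ((b.2.val = 0 ∧ a.2.val = 0 ∧ (b.1.val + 1) % n = a.1.val) ∨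
        (b.1 = a.1 ∧ b.2.val + 1 = a.2.val))) :=
  SimpleGraph.fromRel_adj _ a b

/-- For `m ≥ 1` and `n ≥ 4` with `mn` even, the independence number of the armed crown
graph obtained from the cycle `C_n` and paths `P_m` equals `mn/2`. -/
theorem indepNum_armedCrownGraph (m n : ℕ) (hm : 1 ≤ m) (hn : 4 ≤ n)
    (h : Even (m * n)) :
    indepNum (armedCrownGraph m n) = m * n / 2 := by
  classical
  have hcardV : Fintype.card (Fin n × Fin m) = n * m := by simp
  have hne2 : ∀ a b : Fin n × Fin m, a.2.val ≠ b.2.val → a ≠ b := by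
    intro a b hne heq; exact hne (by rw [heq])
  have hne1 : ∀ a b : Fin n × Fin m, a.1.val ≠ b.1.val → a ≠ b := by
    intro a b hne heq; exact hne (by rw [heq])
  -- every independent set has at most m*n/2 vertices
  have hub : ∀ k ∈ {k : ℕ | ∃ s : Finset (Fin n × Fin m), s.card = k ∧
      ∀ u ∈ s, ∀ v ∈ s, ¬ (armedCrownGraph m n).Adj u v}, k ≤ m * n / 2 := by
    rintro k ⟨s, rfl, hs⟩
    have key : 2 * s.card ≤ n * m := by
      rcases Nat.even_or_odd m with hme | hmo
      · -- m even : match (i, 2t) with (i, 2t+1)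
        have hm2 : m % 2 = 0 := Nat.even_iff.mp hme
        set p : Fin n × Fin m → Fin n × Fin m := fun v =>
          (v.1, if h2 : v.2.val % 2 = 0 then ⟨v.2.val + 1, by have := v.2.isLt; omega⟩
                else ⟨v.2.val - 1, by have := v.2.isLt; omega⟩) with hpdef
        have hp : ∀ v, (armedCrownGraph m n).Adj v (p v) := by
          rintro ⟨i, j⟩
          have hj := j.isLt
          rw [armedCrownGraph_adj]
          by_cases h2 : j.val % 2 = 0
          · have e1 : p (i, j) = (i, ⟨j.val + 1, by omega⟩) := by simp [hpdef, h2]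
            rw [e1]
            exact ⟨hne2 _ _ (by show j.val ≠ j.val + 1; omega),
              Or.inl (Or.inr ⟨rfl, rfl⟩)⟩
          · have e1 : p (i, j) = (i, ⟨j.val - 1, by omega⟩) := by simp [hpdef, h2]
            rw [e1]
            exact ⟨hne2 _ _ (by show j.val ≠ j.val - 1; omega),
              Or.inr (Or.inr ⟨rfl, by show j.val - 1 + 1 = j.val; omega⟩)⟩
        have hinv : ∀ v, p (p v) = v := by
          rintro ⟨i, j⟩
          have hj := j.isLt
          by_cases h2 : j.val % 2 = 0
          · have e1 : p (i, j) = (i, ⟨j.val + 1, by omega⟩) := by simp [hpdef, h2]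
            have c1 : ¬ ((j.val + 1) % 2 = 0) := by omega
            have e2 : p (i, (⟨j.val + 1, by omega⟩ : Fin m)) = (i, j) := by
              simp only [hpdef, dif_neg c1]
              exact Prod.ext rfl (Fin.ext (by show j.val + 1 - 1 = j.val; omega))
            rw [e1, e2]
          · have e1 : p (i, j) = (i, ⟨j.val - 1, by omega⟩) := by simp [hpdef, h2]
            have c1 : (j.val - 1) % 2 = 0 := by omega
            have e2 : p (i, (⟨j.val - 1, by omega⟩ : Fin m)) = (i, j) := by
              simp only [hpdef, dif_pos c1]
              exact Prod.ext rfl (Fin.ext (by show j.val - 1 + 1 = j.val; omega))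
            rw [e1, e2]
        have := two_mul_indep_le _ p hp hinv s hs
        rwa [hcardV] at this
      · -- m odd, so n even
        have hm2 : m % 2 = 1 := Nat.odd_iff.mp hmo
        have hn2 : n % 2 = 0 := by
          rcases Nat.even_mul.mp h with he | he
          · exact absurd (Nat.even_iff.mp he) (by omega)
          · exact Nat.even_iff.mp he
        set p : Fin n × Fin m → Fin n × Fin m := fun v =>
          if h0 : v.2.val = 0 then
            (if h1 : v.1.val % 2 = 0 then (⟨v.1.val + 1, by have := v.1.isLt; omega⟩, v.2)
             else (⟨v.1.val - 1, by have := v.1.isLt; omega⟩, v.2))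
          else (v.1, if h1 : v.2.val % 2 = 1 then ⟨v.2.val + 1, by have := v.2.isLt; omega⟩
                     else ⟨v.2.val - 1, by have := v.2.isLt; omega⟩) with hpdef
        have hp : ∀ v, (armedCrownGraph m n).Adj v (p v) := by
          rintro ⟨i, j⟩
          have hj := j.isLt
          have hi := i.isLt
          rw [armedCrownGraph_adj]
          by_cases h0 : j.val = 0
          · by_cases h1 : i.val % 2 = 0
            · have e1 : p (i, j) = (⟨i.val + 1, by omega⟩, j) := by simp [hpdef, h0, h1]
              rw [e1]
              exact ⟨hne1 _ _ (by show i.val ≠ i.val + 1; omega),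
                Or.inl (Or.inl ⟨h0, h0, Nat.mod_eq_of_lt (show i.val + 1 < n by omega)⟩)⟩
            · have e1 : p (i, j) = (⟨i.val - 1, by omega⟩, j) := by simp [hpdef, h0, h1]
              rw [e1]
              refine ⟨hne1 _ _ (by show i.val ≠ i.val - 1; omega),
                Or.inr (Or.inl ⟨h0, h0, ?_⟩)⟩
              show (i.val - 1 + 1) % n = i.val
              rw [Nat.sub_add_cancel (by omega)]
              exact Nat.mod_eq_of_lt hi
          · by_cases h1 : j.val % 2 = 1
            · have e1 : p (i, j) = (i, ⟨j.val + 1, by omega⟩) := by simp [hpdef, h0, h1]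
              rw [e1]
              exact ⟨hne2 _ _ (by show j.val ≠ j.val + 1; omega),
                Or.inl (Or.inr ⟨rfl, rfl⟩)⟩
            · have e1 : p (i, j) = (i, ⟨j.val - 1, by omega⟩) := by simp [hpdef, h0, h1]
              rw [e1]
              exact ⟨hne2 _ _ (by show j.val ≠ j.val - 1; omega),
                Or.inr (Or.inr ⟨rfl, by show j.val - 1 + 1 = j.val; omega⟩)⟩
        have hinv : ∀ v, p (p v) = v := by
          rintro ⟨i, j⟩
          have hj := j.isLt
          have hi := i.isLt
          by_cases h0 : j.val = 0
          · by_cases h1 : i.val % 2 = 0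
            · have e1 : p (i, j) = (⟨i.val + 1, by omega⟩, j) := by simp [hpdef, h0, h1]
              have c1 : ¬ ((i.val + 1) % 2 = 0) := by omega
              have e2 : p ((⟨i.val + 1, by omega⟩ : Fin n), j) = (i, j) := by
                simp only [hpdef, dif_pos h0, dif_neg c1]
                exact Prod.ext (Fin.ext (by show i.val + 1 - 1 = i.val; omega)) rfl
              rw [e1, e2]
            · have e1 : p (i, j) = (⟨i.val - 1, by omega⟩, j) := by simp [hpdef, h0, h1]
              have c1 : (i.val - 1) % 2 = 0 := by omega
              have e2 : p ((⟨i.val - 1, by omega⟩ : Fin n), j) = (i, j) := by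
                simp only [hpdef, dif_pos h0, dif_pos c1]
                exact Prod.ext (Fin.ext (by show i.val - 1 + 1 = i.val; omega)) rfl
              rw [e1, e2]
          · by_cases h1 : j.val % 2 = 1
            · have e1 : p (i, j) = (i, ⟨j.val + 1, by omega⟩) := by simp [hpdef, h0, h1]
              have c0 : ¬ (j.val + 1 = 0) := by omega
              have c1 : ¬ ((j.val + 1) % 2 = 1) := by omega
              have e2 : p (i, (⟨j.val + 1, by omega⟩ : Fin m)) = (i, j) := by
                simp only [hpdef, dif_neg c0, dif_neg c1]
                exact Prod.ext rfl (Fin.ext (by show j.val + 1 - 1 = j.val; omega))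
              rw [e1, e2]
            · have e1 : p (i, j) = (i, ⟨j.val - 1, by omega⟩) := by simp [hpdef, h0, h1]
              have c0 : ¬ (j.val - 1 = 0) := by omega
              have c1 : (j.val - 1) % 2 = 1 := by omega
              have e2 : p (i, (⟨j.val - 1, by omega⟩ : Fin m)) = (i, j) := by
                simp only [hpdef, dif_neg c0, dif_pos c1]
                exact Prod.ext rfl (Fin.ext (by show j.val - 1 + 1 = j.val; omega))
              rw [e1, e2]
        have := two_mul_indep_le _ p hp hinv s hs
        rwa [hcardV] at this
    have hcomm : m * n = n * m := Nat.mul_comm m n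
    omega
  -- construction of an independent set of size m*n/2
  have hmem : m * n / 2 ∈ {k : ℕ | ∃ s : Finset (Fin n × Fin m), s.card = k ∧
      ∀ u ∈ s, ∀ v ∈ s, ¬ (armedCrownGraph m n).Adj u v} := by
    rcases Nat.even_or_odd m with hme | hmo
    · have hm2 : m % 2 = 0 := Nat.even_iff.mp hme
      set f : Fin n × Fin (m / 2) → Fin n × Fin m := fun x =>
        (x.1, ⟨2 * x.2.val + 1, by have := x.2.isLt; omega⟩) with hfdef
      have hinj : Function.Injective f := by
        intro a b hab
        have h1 : (f a).1.val = (f b).1.val := by rw [hab]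
        have h2 : (f a).2.val = (f b).2.val := by rw [hab]
        rw [show (f a).1.val = a.1.val from rfl,
          show (f b).1.val = b.1.val from rfl] at h1
        rw [show (f a).2.val = 2 * a.2.val + 1 from rfl,
          show (f b).2.val = 2 * b.2.val + 1 from rfl] at h2
        exact Prod.ext (Fin.ext h1) (Fin.ext (by omega))
      refine ⟨Finset.univ.image f, ?_, ?_⟩
      · rw [Finset.card_image_of_injective _ hinj, Finset.card_univ]
        rw [Fintype.card_prod, Fintype.card_fin, Fintype.card_fin]
        obtain ⟨t, rfl⟩ := hme
        have h1 : (t + t) * n = 2 * (t * n) := by ring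
        have h2 : (t + t) / 2 = t := by omega
        rw [h1, Nat.mul_div_cancel_left _ (by norm_num : (0:ℕ) < 2), h2]
        ring
      · intro u hu v hv hadj
        simp only [Finset.mem_image, Finset.mem_univ, true_and] at hu hv
        obtain ⟨x, rfl⟩ := hu
        obtain ⟨y, rfl⟩ := hv
        rw [armedCrownGraph_adj] at hadj
        obtain ⟨-, hrel⟩ := hadj
        have hfx2 : (f x).2.val = 2 * x.2.val + 1 := rfl
        have hfy2 : (f y).2.val = 2 * y.2.val + 1 := rfl
        have hfx1 : (f x).1.val = x.1.val := rfl
        have hfy1 : (f y).1.val = y.1.val := rfl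
        rcases hrel with (⟨h1, h2, h3⟩ | ⟨h1, h2⟩) | (⟨h1, h2, h3⟩ | ⟨h1, h2⟩)
        · rw [hfx2] at h1; omega
        · rw [hfx2, hfy2] at h2; omega
        · rw [hfy2] at h1; omega
        · rw [hfx2, hfy2] at h2; omega
    · have hm2 : m % 2 = 1 := Nat.odd_iff.mp hmo
      have hn2 : n % 2 = 0 := by
        rcases Nat.even_mul.mp h with he | he
        · exact absurd (Nat.even_iff.mp he) (by omega)
        · exact Nat.even_iff.mp he
      set f : Fin (n / 2) × Fin m → Fin n × Fin m := fun x =>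
        (⟨2 * x.1.val + x.2.val % 2, by have := x.1.isLt; omega⟩, x.2) with hfdef
      have hinj : Function.Injective f := by
        intro a b hab
        have h1 : (f a).1.val = (f b).1.val := by rw [hab]
        have h2 : (f a).2.val = (f b).2.val := by rw [hab]
        rw [show (f a).1.val = 2 * a.1.val + a.2.val % 2 from rfl,
          show (f b).1.val = 2 * b.1.val + b.2.val % 2 from rfl] at h1
        rw [show (f a).2.val = a.2.val from rfl,
          show (f b).2.val = b.2.val from rfl] at h2
        exact Prod.ext (Fin.ext (by omega)) (Fin.ext h2)
      refine ⟨Finset.univ.image f, ?_, ?_⟩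
      · rw [Finset.card_image_of_injective _ hinj, Finset.card_univ]
        rw [Fintype.card_prod, Fintype.card_fin, Fintype.card_fin]
        obtain ⟨t, hnt⟩ := Nat.even_iff.mpr hn2
        subst hnt
        have h1 : m * (t + t) = 2 * (m * t) := by ring
        have h2 : (t + t) / 2 = t := by omega
        rw [h1, Nat.mul_div_cancel_left _ (by norm_num : (0:ℕ) < 2), h2]
        ring
      · intro u hu v hv hadj
        simp only [Finset.mem_image, Finset.mem_univ, true_and] at hu hv
        obtain ⟨x, rfl⟩ := hu
        obtain ⟨y, rfl⟩ := hv
        rw [armedCrownGraph_adj] at hadj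
        obtain ⟨-, hrel⟩ := hadj
        have hx1 := x.1.isLt
        have hy1 := y.1.isLt
        have hfx1 : (f x).1.val = 2 * x.1.val + x.2.val % 2 := rfl
        have hfy1 : (f y).1.val = 2 * y.1.val + y.2.val % 2 := rfl
        have hfx2 : (f x).2.val = x.2.val := rfl
        have hfy2 : (f y).2.val = y.2.val := rfl
        rcases hrel with (⟨h1, h2, h3⟩ | ⟨h1, h2⟩) | (⟨h1, h2, h3⟩ | ⟨h1, h2⟩)
        · rw [hfx2] at h1
          rw [hfy2] at h2
          rw [hfx1, hfy1, h1, h2] at h3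
          have hkey : (2 * x.1.val + 0 % 2 + 1) % n = 2 * x.1.val + 0 % 2 + 1 :=
            Nat.mod_eq_of_lt (by omega)
          rw [hkey] at h3
          omega
        · have h1' : (f x).1.val = (f y).1.val := congrArg Fin.val h1
          rw [hfx1, hfy1] at h1'
          rw [hfx2, hfy2] at h2
          omega
        · rw [hfy2] at h1
          rw [hfx2] at h2
          rw [hfx1, hfy1, h1, h2] at h3
          have hkey : (2 * y.1.val + 0 % 2 + 1) % n = 2 * y.1.val + 0 % 2 + 1 :=
            Nat.mod_eq_of_lt (by omega)
          rw [hkey] at h3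
          omega
        · have h1' : (f y).1.val = (f x).1.val := congrArg Fin.val h1
          rw [hfx1, hfy1] at h1'
          rw [hfx2, hfy2] at h2
          omega
  -- conclude
  unfold indepNum
  exact le_antisymm (csSup_le ⟨_, hmem⟩ hub) (le_csSup ⟨m * n / 2, fun k hk => hub k hk⟩ hmem)
end

section
/- For all integers m ≥ 1 and n ≥ 4 with mn even, the armed crown graph G obtained from the cycle C_n and paths P_m satisfies β(G) + β(complement of G) = (3mn − 4)/2 and β(G) · β(complement of G) = mn(mn − 2)/2, where β denotes the vertex cover number. -/
section Aux

lemma acg_mod_lem {n a b : ℕ} (ha : a < n) (hb : b < n) :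
    (a + 1) % n = b ↔ (b = a + 1 ∨ (a + 1 = n ∧ b = 0)) := by
  rcases Nat.lt_or_ge (a + 1) n with h | h
  · rw [Nat.mod_eq_of_lt h]; omega
  · have hh : a + 1 = n := by omega
    rw [hh, Nat.mod_self]; omega

/-- adjacency in the armed crown graph, as linear-arithmetic facts -/
lemma acg_adj_cases {m n : ℕ} {x y : Fin n × Fin m}
    (h : (armedCrownGraph m n).Adj x y) :
    ¬(x.1.val = y.1.val ∧ x.2.val = y.2.val) ∧
    ((x.1.val = y.1.val ∧ (x.2.val + 1 = y.2.val ∨ y.2.val + 1 = x.2.val)) ∨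
     (x.2.val = 0 ∧ y.2.val = 0 ∧
       (y.1.val = x.1.val + 1 ∨ (x.1.val + 1 = n ∧ y.1.val = 0) ∨
        x.1.val = y.1.val + 1 ∨ (y.1.val + 1 = n ∧ x.1.val = 0)))) := by
  rw [armedCrownGraph, SimpleGraph.fromRel_adj] at h
  obtain ⟨hne, hr⟩ := h
  refine ⟨fun ⟨h1, h2⟩ => hne (Prod.ext (Fin.ext h1) (Fin.ext h2)), ?_⟩
  rcases hr with (⟨h1, h2, h3⟩ | ⟨h1, h2⟩) | (⟨h1, h2, h3⟩ | ⟨h1, h2⟩)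
  · rw [acg_mod_lem x.1.isLt y.1.isLt] at h3
    exact Or.inr ⟨h1, h2, by omega⟩
  · exact Or.inl ⟨congrArg Fin.val h1, Or.inl h2⟩
  · rw [acg_mod_lem y.1.isLt x.1.isLt] at h3
    exact Or.inr ⟨h2, h1, by omega⟩
  · exact Or.inl ⟨(congrArg Fin.val h1).symm, Or.inr h2⟩

lemma acg_adj_path {m n : ℕ} {a b : Fin n × Fin m} (h1 : a.1 = b.1)
    (h2 : a.2.val + 1 = b.2.val) : (armedCrownGraph m n).Adj a b := by
  rw [armedCrownGraph, SimpleGraph.fromRel_adj]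
  refine ⟨fun he => ?_, Or.inl (Or.inr ⟨h1, h2⟩)⟩
  rw [he] at h2; omega

lemma acg_adj_cycle {m n : ℕ} (hn : 2 ≤ n) {a b : Fin n × Fin m} (h1 : a.2.val = 0)
    (h2 : b.2.val = 0) (h3 : (a.1.val + 1) % n = b.1.val) :
    (armedCrownGraph m n).Adj a b := by
  rw [armedCrownGraph, SimpleGraph.fromRel_adj]
  refine ⟨fun he => ?_, Or.inl (Or.inl ⟨h1, h2, h3⟩)⟩
  rw [he] at h3
  rw [acg_mod_lem b.1.isLt b.1.isLt] at h3
  have := b.1.isLt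
  omega

/-- no triangles in the armed crown graph -/
lemma acg_triangle_free {m n : ℕ} (hn : 4 ≤ n) {x y z : Fin n × Fin m}
    (hxy : (armedCrownGraph m n).Adj x y) (hyz : (armedCrownGraph m n).Adj y z)
    (hxz : (armedCrownGraph m n).Adj x z) : False := by
  obtain ⟨ne1, c1⟩ := acg_adj_cases hxy
  obtain ⟨ne2, c2⟩ := acg_adj_cases hyz
  obtain ⟨ne3, c3⟩ := acg_adj_cases hxz
  omega

/-- generic: a perfect matching (as adjacency involution) together with an
independent set containing exactly one endpoint of each matching edge determines
the cover number. -/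
lemma coverNum_eq_half {V : Type*} [Fintype V] [DecidableEq V] (G : SimpleGraph V)
    (S : Finset V) (f : V → V)
    (hind : ∀ u ∈ S, ∀ v ∈ S, ¬G.Adj u v)
    (hinv : ∀ v, f (f v) = v)
    (hadj : ∀ v, G.Adj v (f v))
    (hswap : ∀ v, v ∈ S ↔ f v ∉ S) :
    coverNum G = Fintype.card V / 2 := by
  have hfinj : Function.Injective f :=
    Function.LeftInverse.injective hinv
  have himg : S.image f = Finset.univ \ S := by
    ext b
    simp only [Finset.mem_image, Finset.mem_sdiff, Finset.mem_univ, true_and]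
    constructor
    · rintro ⟨a, ha, rfl⟩
      exact (hswap a).mp ha
    · intro hb
      refine ⟨f b, ?_, hinv b⟩
      rw [hswap (f b), hinv b]
      exact hb
  have hScard : 2 * S.card = Fintype.card V := by
    have h1 : (S.image f).card = S.card := Finset.card_image_of_injective _ hfinj
    have h2 : (Finset.univ \ S).card = Fintype.card V - S.card := by
      rw [Finset.card_sdiff_of_subset (Finset.subset_univ S), Finset.card_univ]
    have h3 := Finset.card_le_univ S
    rw [himg, h2] at h1
    omega
  apply le_antisymm
  · apply Nat.sInf_le
    refine ⟨Finset.univ \ S, ?_, ?_⟩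
    · rw [Finset.card_sdiff_of_subset (Finset.subset_univ S), Finset.card_univ]
      omega
    · intro u v huv
      by_contra hc
      push_neg at hc
      obtain ⟨h1, h2⟩ := hc
      simp only [Finset.mem_sdiff, Finset.mem_univ, true_and, not_not] at h1 h2
      exact hind u h1 v h2 huv
  · refine le_csInf ⟨Fintype.card V, Finset.univ, by simp, fun u v _ => Or.inl (Finset.mem_univ u)⟩ ?_
    rintro k ⟨s, rfl, hcov⟩
    have hle : (Finset.univ \ s).card ≤ s.card := by
      apply Finset.card_le_card_of_injOn f
      · intro a ha
        simp only [Finset.mem_coe, Finset.mem_sdiff, Finset.mem_univ, true_and] at ha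
        rcases hcov a (f a) (hadj a) with h | h
        · exact absurd h ha
        · exact h
      · exact hfinj.injOn
    have h2 : (Finset.univ \ s).card = Fintype.card V - s.card := by
      rw [Finset.card_sdiff_of_subset (Finset.subset_univ s), Finset.card_univ]
    omega

/-- generic: for a triangle-free graph with at least one edge, the cover number of
the complement is `|V| - 2`. -/
lemma coverNum_compl_eq {V : Type*} [Fintype V] [DecidableEq V] (G : SimpleGraph V)
    (a b : V) (hab : G.Adj a b)
    (htri : ∀ x y z : V, G.Adj x y → G.Adj y z → G.Adj x z → False) :
    coverNum Gᶜ = Fintype.card V - 2 := by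
  apply le_antisymm
  · apply Nat.sInf_le
    refine ⟨Finset.univ \ {a, b}, ?_, ?_⟩
    · rw [Finset.card_sdiff_of_subset (Finset.subset_univ _), Finset.card_univ,
        Finset.card_insert_of_notMem (by simpa using hab.ne), Finset.card_singleton]
    · intro u v huv
      by_contra hc
      push_neg at hc
      obtain ⟨h1, h2⟩ := hc
      simp only [Finset.mem_sdiff, Finset.mem_univ, true_and, not_not,
        Finset.mem_insert, Finset.mem_singleton] at h1 h2
      have hne := huv.ne
      have hnadj := (SimpleGraph.compl_adj G u v).mp huv |>.2
      rcases h1 with rfl | rfl <;> rcases h2 with rfl | rfl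
      · exact hne rfl
      · exact hnadj hab
      · exact hnadj hab.symm
      · exact hne rfl
  · refine le_csInf ⟨Fintype.card V, Finset.univ, by simp, fun u v _ => Or.inl (Finset.mem_univ u)⟩ ?_
    rintro k ⟨s, rfl, hcov⟩
    have hcard : (Finset.univ \ s).card ≤ 2 := by
      by_contra hc
      push_neg at hc
      obtain ⟨x, y, z, hx, hy, hz, hxy, hxz, hyz⟩ := Finset.two_lt_card_iff.mp hc
      simp only [Finset.mem_sdiff, Finset.mem_univ, true_and] at hx hy hz
      have adj : ∀ p q : V, p ≠ q → p ∉ s → q ∉ s → G.Adj p q := by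
        intro p q hpq hp hq
        by_contra hng
        rcases hcov p q ((SimpleGraph.compl_adj G p q).mpr ⟨hpq, hng⟩) with h | h
        · exact hp h
        · exact hq h
      exact htri x y z (adj x y hxy hx hy) (adj y z hyz hy hz) (adj x z hxz hx hz)
    have h2 : (Finset.univ \ s).card = Fintype.card V - s.card := by
      rw [Finset.card_sdiff_of_subset (Finset.subset_univ s), Finset.card_univ]
    have h3 := Finset.card_le_univ s
    omega

end Aux

/-- For `m ≥ 1` and `n ≥ 4` with `mn` even, the armed crown graph `G` satisfies
`β(G) + β(Gᶜ) = (3mn-4)/2` and `β(G) * β(Gᶜ) = mn(mn-2)/2`. -/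
theorem coverNum_armedCrownGraph_add_mul_complement (m n : ℕ) (hm : 1 ≤ m) (hn : 4 ≤ n)
    (h : Even (m * n)) :
    coverNum (armedCrownGraph m n) + coverNum (armedCrownGraph m n)ᶜ =
      (3 * m * n - 4) / 2 ∧
    coverNum (armedCrownGraph m n) * coverNum (armedCrownGraph m n)ᶜ =
      m * n * (m * n - 2) / 2 := by
  have hcardV : Fintype.card (Fin n × Fin m) = m * n := by
    simp [Fintype.card_prod, mul_comm]
  -- the cover number of the complement
  have hmn4 : 4 ≤ m * n := le_trans hn (Nat.le_mul_of_pos_left n hm)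
  have key2 : coverNum (armedCrownGraph m n)ᶜ = m * n - 2 := by
    rw [← hcardV]
    apply coverNum_compl_eq (armedCrownGraph m n)
      ((⟨0, by omega⟩ : Fin n), (⟨0, by omega⟩ : Fin m))
      ((⟨1, by omega⟩ : Fin n), (⟨0, by omega⟩ : Fin m))
    · apply acg_adj_cycle (by omega) rfl rfl
      simp only
      exact Nat.mod_eq_of_lt (by omega)
    · exact fun x y z h1 h2 h3 => acg_triangle_free hn h1 h2 h3
  -- the cover number of the graph itself
  have key1 : coverNum (armedCrownGraph m n) = m * n / 2 := by
    rw [← hcardV]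
    rcases Nat.even_or_odd m with hme | hmo
    · -- m even : match (i,2k)-(i,2k+1); independent set = odd j
      obtain ⟨a, ha⟩ := hme
      apply coverNum_eq_half (armedCrownGraph m n)
        (Finset.univ.filter (fun p => p.2.val % 2 = 1))
        (fun p => (p.1, ⟨if p.2.val % 2 = 0 then p.2.val + 1 else p.2.val - 1,
          by have := p.2.isLt; split_ifs with hh <;> omega⟩))
      · intro u hu v hv huv
        simp only [Finset.mem_filter] at hu hv
        obtain ⟨_, hc⟩ := acg_adj_cases huv
        omega
      · intro v
        have hv := v.2.isLt
        refine Prod.ext rfl (Fin.ext ?_)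
        simp only
        split_ifs <;> omega
      · intro v
        have hv := v.2.isLt
        by_cases h1 : v.2.val % 2 = 0
        · apply acg_adj_path
          · rfl
          · simp [h1]
        · apply SimpleGraph.adj_symm
          apply acg_adj_path
          · rfl
          · simp only [if_neg h1]
            omega
      · intro v
        have hv := v.2.isLt
        simp only [Finset.mem_filter, Finset.mem_univ, true_and]
        split_ifs with h1 <;> omega
    · -- m odd, hence n even: match paths (i,2k+1)-(i,2k+2) and cycle (2k,0)-(2k+1,0);
      -- independent set = {(i,j) : j ≡ i mod 2}
      have hne : Even n := by
        rcases Nat.even_mul.mp h with h' | h'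
        · exact absurd h' (Nat.not_even_iff_odd.mpr hmo)
        · exact h'
      obtain ⟨b, hb⟩ := hne
      obtain ⟨a, ha⟩ := hmo
      apply coverNum_eq_half (armedCrownGraph m n)
        (Finset.univ.filter (fun p => p.2.val % 2 = p.1.val % 2))
        (fun p => if p.2.val = 0 then
            ((⟨if p.1.val % 2 = 0 then p.1.val + 1 else p.1.val - 1,
              by have := p.1.isLt; split_ifs with hh <;> omega⟩ : Fin n), p.2)
          else
            (p.1, ⟨if p.2.val % 2 = 1 then p.2.val + 1 else p.2.val - 1,
              by have := p.2.isLt; split_ifs with hh <;> omega⟩))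
      · intro u hu v hv huv
        simp only [Finset.mem_filter] at hu hv
        obtain ⟨_, hc⟩ := acg_adj_cases huv
        omega
      · intro v
        have hv2 := v.2.isLt
        have hv1 := v.1.isLt
        by_cases h0 : v.2.val = 0
        · simp only [if_pos h0, h0, if_pos]
          refine Prod.ext (Fin.ext ?_) rfl
          simp only
          split_ifs <;> omega
        · have hj1 : ¬ ((if v.2.val % 2 = 1 then v.2.val + 1 else v.2.val - 1) = 0) := by
            split_ifs with hh
            · simp
            · omega
          simp only [if_neg h0, if_neg hj1]
          refine Prod.ext rfl (Fin.ext ?_)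
          simp only
          split_ifs <;> omega
      · intro v
        have hv2 := v.2.isLt
        have hv1 := v.1.isLt
        by_cases h0 : v.2.val = 0
        · rw [if_pos h0]
          by_cases h1 : v.1.val % 2 = 0
          · apply acg_adj_cycle (by omega)
            · exact h0
            · exact h0
            · simp only [if_pos h1]
              exact Nat.mod_eq_of_lt (by omega)
          · apply SimpleGraph.adj_symm
            apply acg_adj_cycle (by omega)
            · exact h0
            · exact h0
            · simp only [if_neg h1]
              rw [Nat.sub_add_cancel (by omega)]
              exact Nat.mod_eq_of_lt (by omega)
        · rw [if_neg h0]
          by_cases h1 : v.2.val % 2 = 1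
          · apply acg_adj_path
            · rfl
            · simp [h1]
          · apply SimpleGraph.adj_symm
            apply acg_adj_path
            · rfl
            · simp only [if_neg h1]
              omega
      · intro v
        have hv2 := v.2.isLt
        have hv1 := v.1.isLt
        simp only [Finset.mem_filter, Finset.mem_univ, true_and]
        by_cases h0 : v.2.val = 0
        · rw [if_pos h0]
          simp only [h0]
          split_ifs with h1 <;> omega
        · rw [if_neg h0]
          simp only
          split_ifs with h1 <;> omega
  rw [key1, key2]
  obtain ⟨k, hk⟩ := h
  have h3 : 3 * m * n = 3 * (m * n) := by ring
  constructor
  · rw [h3]; omega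
  · have h1 : m * n / 2 = k := by omega
    have h2 : m * n = 2 * k := by omega
    rw [h1, h2]
    have : 2 * k * (2 * k - 2) = 2 * (k * (2 * k - 2)) := by ring
    rw [this, Nat.mul_div_cancel_left _ (by norm_num)]
end
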